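/- There exist finite uniformly labeled graphs G_1, G_2 and vertices u ∈ V(G_1), v ∈ V(G_2) such that the unfolding trees F_h^u and F_h^v are not isomorphic for some height h ≥ 4, while for every height h the truncated epath trees TPT_h^u and TPT_h^v are isomorphic. Hence truncated epath trees are not strictly more expressive than unfolding trees on the node level (refuting Lemma 6 of the RFGNN paper). -/

import Mathlib

open scoped Classical

universe u v

/-- A rooted labeled (unordered) tree: a root label together with a list of
child subtrees.  The list order is irrelevant for the isomorphism relation. -/
inductive LTree (L : Type u) : Type u
  | node : L → List (LTree L) → LTree L

namespace LTree

variable {L : Type u} {L' C : Type v}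

/-- The label of the root. -/
def label : LTree L → L
  | node a _ => a

/-- The child subtrees of the root. -/
def children : LTree L → List (LTree L)
  | node _ ts => ts

/-- Isomorphism of rooted labeled trees: there is a bijection between the node
sets preserving the root, the parent–child relation and node labels; for our
representation this means equal root labels and children that correspond, up to
a permutation, to pairwise isomorphic subtrees. -/
inductive Iso : LTree L → LTree L → Prop
  | node (a : L) {ts us vs : List (LTree L)} :
      List.Forall₂ Iso ts vs → vs.Perm us → Iso (node a ts) (node a us)

/-- `Embeds t s` : `t` is an induced rooted subtree of `s`, i.e. the nodes of
`t` inject into the nodes of `s` preserving the root, labels and the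
parent–child relation. -/
inductive Embeds : LTree L → LTree L → Prop
  | node (a : L) {ts us vs : List (LTree L)} :
      List.Forall₂ Embeds ts vs → vs.Subperm us → Embeds (node a ts) (node a us)

/-- Number of nodes of a rooted tree. -/
def size : LTree L → ℕ
  | node _ ts => 1 + (ts.attach.map (fun c => size c.1)).sum
decreasing_by simp_wf; have := List.sizeOf_lt_of_mem c.2; omega

/-- Relabel a tree by `f`. -/
def map (f : L → L') : LTree L → LTree L'
  | node a ts => node (f a) (ts.attach.map (fun c => map f c.1))
decreasing_by simp_wf; have := List.sizeOf_lt_of_mem c.2; omega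

/-- Number of nodes of the tree carrying label `x`. -/
def countLabel [DecidableEq L] (x : L) : LTree L → ℕ
  | node a ts => (if a = x then 1 else 0) + (ts.attach.map (fun c => countLabel x c.1)).sum
decreasing_by simp_wf; have := List.sizeOf_lt_of_mem c.2; omega

/-- Number of nodes at depth `d` carrying label `x`. -/
def countAt [DecidableEq L] (x : L) : ℕ → LTree L → ℕ
  | 0, node a _ => if a = x then 1 else 0
  | d+1, node _ ts => (ts.attach.map (fun c => countAt x d c.1)).sum
termination_by _ t => sizeOf t
decreasing_by simp_wf; have := List.sizeOf_lt_of_mem c.2; omega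

/-- `SubtreeAt t d s` : `s` is the subtree of `t` rooted at one of the nodes of
`t` at depth `d`. -/
inductive SubtreeAt : LTree L → ℕ → LTree L → Prop
  | refl (t : LTree L) : SubtreeAt t 0 t
  | step {t c s : LTree L} {d : ℕ} : c ∈ t.children → SubtreeAt c d s → SubtreeAt t (d+1) s

/-- The AHU canonical value: `ahu f t = f (label t) {{ ahu f c | c child of t }}`,
computed bottom-up (a leaf gets `f (label) ∅`). -/
noncomputable def ahu (f : L → Multiset C → C) : LTree L → C
  | node a ts => f a (↑(ts.attach.map (fun c => ahu f c.1)) : Multiset C)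
decreasing_by simp_wf; have := List.sizeOf_lt_of_mem c.2; omega


theorem size_node (a : L) (ts : List (LTree L)) :
    size (node a ts) = 1 + (ts.map size).sum := by
  rw [size, List.attach_map_val]

theorem forall₂_map_eq {α β γ : Type*} {R : α → β → Prop} {f : α → γ} {g : β → γ} :
    ∀ {l1 : List α} {l2 : List β}, List.Forall₂ R l1 l2 →
      (∀ a ∈ l1, ∀ b, R a b → f a = g b) → l1.map f = l2.map g := by
  intro l1 l2 h
  induction h with
  | nil => simp
  | cons hab _ ih =>
    intro hp
    simp only [List.map_cons]
    rw [hp _ (by simp) _ hab, ih (fun a ha b hr => hp a (by simp [ha]) b hr)]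

theorem Iso.size_eq : ∀ {t s : LTree L}, Iso t s → size t = size s := by
  suffices H : ∀ n (t s : LTree L), sizeOf t ≤ n → Iso t s → size t = size s by
    intro t s h; exact H (sizeOf t) t s le_rfl h
  intro n
  induction n with
  | zero =>
    intro t s ht h
    cases t with | node a ts => simp at ht
  | succ n ih =>
    intro t s ht h
    cases h with
    | node a hf hp =>
      rename_i ts us vs
      rw [size_node, size_node]
      have hb : ∀ t' ∈ ts, sizeOf t' ≤ n := by
        intro t' ht'
        have h1 := List.sizeOf_lt_of_mem ht'
        simp at ht; omega
      have hmap : ts.map size = vs.map size :=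
        forall₂_map_eq hf (fun a ha b hr => ih a b (hb a ha) hr)
      rw [hmap, (hp.map size).sum_eq]

theorem forall₂_map_same {α β γ : Type*} {R : β → γ → Prop} (f : α → β) (g : α → γ) :
    ∀ {l : List α}, (∀ x ∈ l, R (f x) (g x)) → List.Forall₂ R (l.map f) (l.map g) := by
  intro l
  induction l with
  | nil => intro _; simp
  | cons a l ih =>
    intro h
    exact List.Forall₂.cons (h a (by simp)) (ih (fun x hx => h x (by simp [hx])))

end LTree

section Graph

variable {V : Type u} {X : Type v}

/-- The unfolding tree `F_i^v` of height `i` of the vertex `v`, with node labels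
given by `μ` (a node representing the graph vertex `x` is labeled `μ x`). -/
noncomputable def SimpleGraph.unfoldingTree (G : SimpleGraph V) [Fintype V] (μ : V → X) :
    ℕ → V → LTree X
  | 0, u => .node (μ u) []
  | i+1, u => .node (μ u) ((G.neighborFinset u).toList.map (G.unfoldingTree μ i))

/-- Auxiliary recursion for `k`-redundant neighborhood trees: `r` is the root
vertex, `d` is the current depth and `x` the currently represented vertex.  A
neighbor `y` is kept at depth `d + 1` iff `d + 1 ≤ dist r y + k`; since the
minimal depth at which `y` occurs in the unfolding tree rooted at `r` is
`dist r y`, this is exactly the pruning condition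
`depth(u) ≤ depth(w) + k` for all nodes `w` with `φ(u) = φ(w)`. -/
noncomputable def SimpleGraph.ntAux (G : SimpleGraph V) [Fintype V] (μ : V → X)
    (r : V) (k : ℕ) : ℕ → ℕ → V → LTree X
  | 0, _, x => .node (μ x) []
  | i+1, d, x => .node (μ x)
      (((G.neighborFinset x).filter (fun y => d + 1 ≤ G.dist r y + k)).toList.map
        (G.ntAux μ r k i (d+1)))

/-- The `k`-redundant neighborhood tree `T_{i,k}^v` of height `i` of vertex `v`. -/
noncomputable def SimpleGraph.ntTree (G : SimpleGraph V) [Fintype V] (μ : V → X)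
    (i k : ℕ) (v : V) : LTree X :=
  G.ntAux μ v k i 0 v

end Graph

/-- `IsEPath G l` : the list of vertices `l` is an epath: a nonempty walk with
no repeated vertices, except that the start vertex may coincide with the end
vertex if the length (number of edges, i.e. `l.length - 1`) is larger than 2. -/
def SimpleGraph.IsEPath {V : Type u} (G : SimpleGraph V) (l : List V) : Prop :=
  l ≠ [] ∧ l.Chain' G.Adj ∧
    (l.Nodup ∨ (l.head? = l.getLast? ∧ l.dropLast.Nodup ∧ 3 < l.length))

/-- Auxiliary recursion for truncated epath trees: `pre` is the list of vertices
of the current epath strictly before the current (last) vertex `x`; a node is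
labeled by `μ` of the last vertex of its epath, and its children are the
one-step extensions that are still epaths. -/
noncomputable def SimpleGraph.tptAux {V : Type u} {X : Type v} (G : SimpleGraph V)
    [Fintype V] (μ : V → X) : ℕ → List V → V → LTree X
  | 0, _, x => .node (μ x) []
  | h+1, pre, x => .node (μ x)
      (((G.neighborFinset x).filter (fun y => G.IsEPath (pre ++ [x, y]))).toList.map
        (G.tptAux μ h (pre ++ [x])))

/-- The truncated epath tree `TPT_h^v` of height `h` rooted at the vertex `v`. -/
noncomputable def SimpleGraph.tpt {V : Type u} {X : Type v} (G : SimpleGraph V)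
    [Fintype V] (μ : V → X) (h : ℕ) (v : V) : LTree X :=
  G.tptAux μ h [] v


section Machinery

/-- Isomorphism of the node trees built from two finsets related by a bijection with
pairwise isomorphic images. -/
theorem iso_node_of_bij {V1 : Type u} {V2 : Type v} (F1 : Finset V1) (F2 : Finset V2)
    (T1 : V1 → LTree Unit) (T2 : V2 → LTree Unit) (e : V1 → V2)
    (hiso : ∀ y ∈ F1, LTree.Iso (T1 y) (T2 (e y)))
    (hinj : Set.InjOn e ↑F1)
    (himg : ∀ w, w ∈ F2 ↔ ∃ y ∈ F1, e y = w) :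
    LTree.Iso (.node () (F1.toList.map T1)) (.node () (F2.toList.map T2)) := by
  classical
  have himg' : F1.image e = F2 := by
    ext w
    rw [Finset.mem_image, himg]
  have hval : F1.val.map e = F2.val := by
    rw [← himg']
    exact (Finset.image_val_of_injOn hinj).symm
  have hperm : (F1.toList.map e).Perm F2.toList := by
    apply Multiset.coe_eq_coe.mp
    rw [← Multiset.map_coe, Finset.coe_toList, Finset.coe_toList, hval]
  refine LTree.Iso.node () (vs := F1.toList.map (fun y => T2 (e y))) ?_ ?_
  · exact LTree.forall₂_map_same T1 (fun y => T2 (e y))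
      (fun y hy => hiso y (Finset.mem_toList.mp hy))
  · have := hperm.map T2
    rwa [List.map_map] at this

/-- Bisimulation principle for truncated epath trees. -/
theorem tpt_bisim {V1 : Type u} {V2 : Type u} [Fintype V1] [Fintype V2]
    (G1 : SimpleGraph V1) (G2 : SimpleGraph V2)
    (R : List V1 → V1 → List V2 → V2 → Prop)
    (step : ∀ p1 x1 p2 x2, R p1 x1 p2 x2 →
      ∃ e : V1 → V2,
        (∀ y, G1.Adj x1 y → G1.IsEPath (p1 ++ [x1, y]) →
          G2.Adj x2 (e y) ∧ G2.IsEPath (p2 ++ [x2, e y]) ∧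
            R (p1 ++ [x1]) y (p2 ++ [x2]) (e y)) ∧
        (∀ y z, (G1.Adj x1 y ∧ G1.IsEPath (p1 ++ [x1, y])) →
          (G1.Adj x1 z ∧ G1.IsEPath (p1 ++ [x1, z])) → e y = e z → y = z) ∧
        (∀ w, G2.Adj x2 w → G2.IsEPath (p2 ++ [x2, w]) →
          ∃ y, (G1.Adj x1 y ∧ G1.IsEPath (p1 ++ [x1, y])) ∧ e y = w)) :
    ∀ (h : ℕ) (p1 : List V1) (x1 : V1) (p2 : List V2) (x2 : V2), R p1 x1 p2 x2 →
      LTree.Iso (G1.tptAux (fun _ => ()) h p1 x1) (G2.tptAux (fun _ => ()) h p2 x2) := by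
  intro h
  induction h with
  | zero =>
    intro p1 x1 p2 x2 _
    simp only [SimpleGraph.tptAux]
    exact LTree.Iso.node () List.Forall₂.nil (List.Perm.refl _)
  | succ h ih =>
    intro p1 x1 p2 x2 hR
    obtain ⟨e, hmap, hinj, hsurj⟩ := step p1 x1 p2 x2 hR
    simp only [SimpleGraph.tptAux]
    apply iso_node_of_bij _ _ _ _ e
    · intro y hy
      rw [Finset.mem_filter, SimpleGraph.mem_neighborFinset] at hy
      exact ih (p1 ++ [x1]) y (p2 ++ [x2]) (e y) (hmap y hy.1 hy.2).2.2
    · intro y hy z hz hyz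
      rw [Finset.coe_filter, Set.mem_setOf_eq, SimpleGraph.mem_neighborFinset] at hy hz
      exact hinj y z hy hz hyz
    · intro w
      rw [Finset.mem_filter, SimpleGraph.mem_neighborFinset]
      constructor
      · rintro ⟨hw1, hw2⟩
        obtain ⟨y, hy, hyw⟩ := hsurj w hw1 hw2
        exact ⟨y, by rw [Finset.mem_filter, SimpleGraph.mem_neighborFinset]; exact hy, hyw⟩
      · rintro ⟨y, hy, rfl⟩
        rw [Finset.mem_filter, SimpleGraph.mem_neighborFinset] at hy
        exact ⟨(hmap y hy.1 hy.2).1, (hmap y hy.1 hy.2).2.1⟩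

/-- A kernel-reducible decidability instance for `List.Chain`. -/
def decChainK {α : Type u} {R : α → α → Prop} [DecidableRel R] :
    ∀ (a : α) (l : List α), Decidable (List.Chain R a l)
  | _, [] => isTrue List.Chain.nil
  | a, b :: l =>
    haveI : Decidable (List.Chain R b l) := decChainK b l
    decidable_of_iff (R a b ∧ List.Chain R b l) List.chain_cons.symm

instance (priority := 1100) decChainK' {α : Type u} {R : α → α → Prop} [DecidableRel R] :
    ∀ (l : List α), Decidable (List.Chain' R l)
  | [] => isTrue List.IsChain.nil
  | a :: l => decChainK a l

instance epathDecidable {V : Type u} [DecidableEq V] (G : SimpleGraph V)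
    [DecidableRel G.Adj] (l : List V) : Decidable (G.IsEPath l) :=
  inferInstanceAs (Decidable (l ≠ [] ∧ l.Chain' G.Adj ∧
    (l.Nodup ∨ (l.head? = l.getLast? ∧ l.dropLast.Nodup ∧ 3 < l.length))))

theorem size_unfold_zero {V : Type u} {X : Type v} (G : SimpleGraph V) [Fintype V]
    (μ : V → X) (u : V) : (G.unfoldingTree μ 0 u).size = 1 := by
  simp [SimpleGraph.unfoldingTree, LTree.size_node]

theorem size_unfold_succ {V : Type u} {X : Type v} (G : SimpleGraph V) [Fintype V]
    (μ : V → X) (h : ℕ) (u : V) :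
    (G.unfoldingTree μ (h+1) u).size
      = 1 + ∑ y ∈ G.neighborFinset u, (G.unfoldingTree μ h y).size := by
  simp only [SimpleGraph.unfoldingTree, LTree.size_node, List.map_map]
  congr 1
  rw [Finset.sum, ← Finset.coe_toList (G.neighborFinset u), Multiset.map_coe,
    Multiset.sum_coe]
  rfl

theorem sum_nbr_eq {V : Type u} (G : SimpleGraph V) [Fintype V] (u : V)
    {inst : Fintype (G.neighborSet u)} (s : Finset V)
    (hs : ∀ y, G.Adj u y ↔ y ∈ s) (f : V → ℕ) :
    ∑ y ∈ @SimpleGraph.neighborFinset _ G u inst, f y = ∑ y ∈ s, f y := by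
  apply Finset.sum_congr _ (fun _ _ => rfl)
  ext y
  simp only [SimpleGraph.mem_neighborFinset]
  exact hs y

end Machinery

section Example10

def adj1 : Fin 4 → Fin 4 → Bool := fun a b =>
  (a.val == 0 && b.val == 1) ||
  (a.val == 1 && b.val == 0) ||
  (a.val == 0 && b.val == 2) ||
  (a.val == 2 && b.val == 0) ||
  (a.val == 0 && b.val == 3) ||
  (a.val == 3 && b.val == 0) ||
  (a.val == 1 && b.val == 2) ||
  (a.val == 2 && b.val == 1)

def adj2 : Fin 6 → Fin 6 → Bool := fun a b =>
  (a.val == 0 && b.val == 1) ||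
  (a.val == 1 && b.val == 0) ||
  (a.val == 0 && b.val == 2) ||
  (a.val == 2 && b.val == 0) ||
  (a.val == 0 && b.val == 5) ||
  (a.val == 5 && b.val == 0) ||
  (a.val == 1 && b.val == 4) ||
  (a.val == 4 && b.val == 1) ||
  (a.val == 2 && b.val == 3) ||
  (a.val == 3 && b.val == 2)

lemma adj1_symm : ∀ a b, adj1 a b = adj1 b a := by decide
lemma adj1_irrefl : ∀ a, adj1 a a = false := by decide
lemma adj2_symm : ∀ a b, adj2 a b = adj2 b a := by decide
lemma adj2_irrefl : ∀ a, adj2 a a = false := by decide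

def g1 : SimpleGraph (Fin 4) where
  Adj := fun a b => adj1 a b
  symm := ⟨fun a b h => by show adj1 b a = true; rw [← adj1_symm a b]; exact h⟩
  loopless := ⟨fun a h => by simp only [adj1_irrefl] at h; exact absurd h (by simp)⟩

def g2 : SimpleGraph (Fin 6) where
  Adj := fun a b => adj2 a b
  symm := ⟨fun a b h => by show adj2 b a = true; rw [← adj2_symm a b]; exact h⟩
  loopless := ⟨fun a h => by simp only [adj2_irrefl] at h; exact absurd h (by simp)⟩

instance : DecidableRel g1.Adj := fun a b => inferInstanceAs (Decidable (adj1 a b = true))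
instance : DecidableRel g2.Adj := fun a b => inferInstanceAs (Decidable (adj2 a b = true))

abbrev RelTPT : List (Fin 4) → Fin 4 → List (Fin 6) → Fin 6 → Prop := fun p1 x1 p2 x2 =>
  (p1 = [] ∧ x1 = 3 ∧ p2 = [] ∧ x2 = 5) ∨
  (p1 = [3] ∧ x1 = 0 ∧ p2 = [5] ∧ x2 = 0) ∨
  (p1 = [3, 0] ∧ x1 = 1 ∧ p2 = [5, 0] ∧ x2 = 1) ∨
  (p1 = [3, 0] ∧ x1 = 2 ∧ p2 = [5, 0] ∧ x2 = 2) ∨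
  (p1 = [3, 0, 1] ∧ x1 = 2 ∧ p2 = [5, 0, 1] ∧ x2 = 4) ∨
  (p1 = [3, 0, 2] ∧ x1 = 1 ∧ p2 = [5, 0, 2] ∧ x2 = 3)

end Example10

lemma s_g1_1_0 : (g1.unfoldingTree (fun _ => ()) 1 0).size = 4 := by
  rw [size_unfold_succ, sum_nbr_eq g1 0 ({1,2,3}) (by decide) _,
    Finset.sum_insert (by decide),
    Finset.sum_insert (by decide),
    Finset.sum_singleton,
    size_unfold_zero,
    size_unfold_zero,
    size_unfold_zero]
  all_goals norm_num

lemma s_g1_1_1 : (g1.unfoldingTree (fun _ => ()) 1 1).size = 3 := by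
  rw [size_unfold_succ, sum_nbr_eq g1 1 ({0,2}) (by decide) _,
    Finset.sum_insert (by decide),
    Finset.sum_singleton,
    size_unfold_zero,
    size_unfold_zero]
  all_goals norm_num

lemma s_g1_1_2 : (g1.unfoldingTree (fun _ => ()) 1 2).size = 3 := by
  rw [size_unfold_succ, sum_nbr_eq g1 2 ({0,1}) (by decide) _,
    Finset.sum_insert (by decide),
    Finset.sum_singleton,
    size_unfold_zero,
    size_unfold_zero]
  all_goals norm_num

lemma s_g1_2_1 : (g1.unfoldingTree (fun _ => ()) 2 1).size = 8 := by
  rw [size_unfold_succ, sum_nbr_eq g1 1 ({0,2}) (by decide) _,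
    Finset.sum_insert (by decide),
    Finset.sum_singleton,
    s_g1_1_0,
    s_g1_1_2]
  all_goals norm_num

lemma s_g1_2_2 : (g1.unfoldingTree (fun _ => ()) 2 2).size = 8 := by
  rw [size_unfold_succ, sum_nbr_eq g1 2 ({0,1}) (by decide) _,
    Finset.sum_insert (by decide),
    Finset.sum_singleton,
    s_g1_1_0,
    s_g1_1_1]
  all_goals norm_num

lemma s_g1_2_3 : (g1.unfoldingTree (fun _ => ()) 2 3).size = 5 := by
  rw [size_unfold_succ, sum_nbr_eq g1 3 ({0}) (by decide) _,
    Finset.sum_singleton,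
    s_g1_1_0]
  all_goals norm_num

lemma s_g1_3_0 : (g1.unfoldingTree (fun _ => ()) 3 0).size = 22 := by
  rw [size_unfold_succ, sum_nbr_eq g1 0 ({1,2,3}) (by decide) _,
    Finset.sum_insert (by decide),
    Finset.sum_insert (by decide),
    Finset.sum_singleton,
    s_g1_2_1,
    s_g1_2_2,
    s_g1_2_3]
  all_goals norm_num

lemma s_g1_4_3 : (g1.unfoldingTree (fun _ => ()) 4 3).size = 23 := by
  rw [size_unfold_succ, sum_nbr_eq g1 3 ({0}) (by decide) _,
    Finset.sum_singleton,
    s_g1_3_0]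
  all_goals norm_num

lemma s_g2_1_0 : (g2.unfoldingTree (fun _ => ()) 1 0).size = 4 := by
  rw [size_unfold_succ, sum_nbr_eq g2 0 ({1,2,5}) (by decide) _,
    Finset.sum_insert (by decide),
    Finset.sum_insert (by decide),
    Finset.sum_singleton,
    size_unfold_zero,
    size_unfold_zero,
    size_unfold_zero]
  all_goals norm_num

lemma s_g2_1_4 : (g2.unfoldingTree (fun _ => ()) 1 4).size = 2 := by
  rw [size_unfold_succ, sum_nbr_eq g2 4 ({1}) (by decide) _,
    Finset.sum_singleton,
    size_unfold_zero]
  all_goals norm_num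

lemma s_g2_1_3 : (g2.unfoldingTree (fun _ => ()) 1 3).size = 2 := by
  rw [size_unfold_succ, sum_nbr_eq g2 3 ({2}) (by decide) _,
    Finset.sum_singleton,
    size_unfold_zero]
  all_goals norm_num

lemma s_g2_2_1 : (g2.unfoldingTree (fun _ => ()) 2 1).size = 7 := by
  rw [size_unfold_succ, sum_nbr_eq g2 1 ({0,4}) (by decide) _,
    Finset.sum_insert (by decide),
    Finset.sum_singleton,
    s_g2_1_0,
    s_g2_1_4]
  all_goals norm_num

lemma s_g2_2_2 : (g2.unfoldingTree (fun _ => ()) 2 2).size = 7 := by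
  rw [size_unfold_succ, sum_nbr_eq g2 2 ({0,3}) (by decide) _,
    Finset.sum_insert (by decide),
    Finset.sum_singleton,
    s_g2_1_0,
    s_g2_1_3]
  all_goals norm_num

lemma s_g2_2_5 : (g2.unfoldingTree (fun _ => ()) 2 5).size = 5 := by
  rw [size_unfold_succ, sum_nbr_eq g2 5 ({0}) (by decide) _,
    Finset.sum_singleton,
    s_g2_1_0]
  all_goals norm_num

lemma s_g2_3_0 : (g2.unfoldingTree (fun _ => ()) 3 0).size = 20 := by
  rw [size_unfold_succ, sum_nbr_eq g2 0 ({1,2,5}) (by decide) _,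
    Finset.sum_insert (by decide),
    Finset.sum_insert (by decide),
    Finset.sum_singleton,
    s_g2_2_1,
    s_g2_2_2,
    s_g2_2_5]
  all_goals norm_num

lemma s_g2_4_5 : (g2.unfoldingTree (fun _ => ()) 4 5).size = 21 := by
  rw [size_unfold_succ, sum_nbr_eq g2 5 ({0}) (by decide) _,
    Finset.sum_singleton,
    s_g2_3_0]
  all_goals norm_num

/-- There exist finite uniformly labeled graphs `G₁, G₂` and
vertices `u ∈ V(G₁)`, `v ∈ V(G₂)` such that the unfolding trees `F_h^u` and
`F_h^v` are not isomorphic for some height `h ≥ 4`, while for every height `h`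
the truncated epath trees `TPT_h^u` and `TPT_h^v` are isomorphic: truncated
epath trees are not strictly more expressive than unfolding trees on the node
level. -/
theorem exists_wl_distinguishes_but_not_tpt :
    ∃ (n₁ n₂ : ℕ) (G₁ : SimpleGraph (Fin n₁)) (G₂ : SimpleGraph (Fin n₂))
      (u : Fin n₁) (v : Fin n₂),
      (∃ h : ℕ, 4 ≤ h ∧ ¬ LTree.Iso (G₁.unfoldingTree (fun _ => ()) h u)
          (G₂.unfoldingTree (fun _ => ()) h v)) ∧
      (∀ h : ℕ, LTree.Iso (G₁.tpt (fun _ => ()) h u)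
          (G₂.tpt (fun _ => ()) h v)) := by
  refine ⟨4, 6, g1, g2, 3, 5, ⟨4, le_rfl, ?_⟩, ?_⟩
  · intro hIso
    have hsz := hIso.size_eq
    rw [s_g1_4_3, s_g2_4_5] at hsz
    norm_num at hsz
  · intro h
    have key : ∀ (h : ℕ) p1 x1 p2 x2, RelTPT p1 x1 p2 x2 →
        LTree.Iso (g1.tptAux (fun _ => ()) h p1 x1) (g2.tptAux (fun _ => ()) h p2 x2) := by
      apply tpt_bisim
      intro p1 x1 p2 x2 hR
      rcases hR with ⟨rfl,rfl,rfl,rfl⟩|⟨rfl,rfl,rfl,rfl⟩|⟨rfl,rfl,rfl,rfl⟩|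
        ⟨rfl,rfl,rfl,rfl⟩|⟨rfl,rfl,rfl,rfl⟩|⟨rfl,rfl,rfl,rfl⟩
      · exact ⟨fun _ => 0, by decide, by decide, by decide⟩
      · exact ⟨fun y => if y = 1 then 1 else 2, by decide, by decide, by decide⟩
      · exact ⟨fun _ => 4, by decide, by decide, by decide⟩
      · exact ⟨fun _ => 3, by decide, by decide, by decide⟩
      · exact ⟨fun _ => 0, by decide, by decide, by decide⟩
      · exact ⟨fun _ => 0, by decide, by decide, by decide⟩
    have hmain := key h [] 3 [] 5 (Or.inl ⟨rfl, rfl, rfl, rfl⟩)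
    simpa [SimpleGraph.tpt] using hmain
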